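/- Let A be a finite L_n-structure with an n-ary relation R, and δ(A) = |A| - |R^A|. Suppose every subset B ⊆ A satisfies δ(B) ≥ 0. Define a clique reduct A_c: its maximal cliques are the maximal sets K ⊆ A^r of size ≥ s = n - r + 1 such that for some (s-1)-tuple ȳ of elements of A, R^A restricted appropriately consists exactly of the tuples (ȳ, x̄) for x̄ ∈ K. Then λ(B_c) ≥ 0 for every subset B ⊆ A, where λ(B_c) = |B| - Σ_{K ∈ maxcliques(B_c)} max(0, |K| - (s-1)). -/

import Mathlib

/-- If `A` is a finite structure with an `n`-ary relation `R` (viewed as a set of pairs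
consisting of an `(s-1)`-tuple and an `r`-tuple, `n = (s-1) + r`) such that
`δ(B) = |B| - |R^B| ≥ 0` for every `B ⊆ A`, then the clique reduct has
`λ(B_c) = |B| - Σ_{K ∈ maxcliques(B_c)} max 0 (|K| - (s-1)) ≥ 0` for every `B ⊆ A`,
where the maximal cliques of `B_c` are the maximal sets `K ⊆ B^r` of size `≥ s` of the
form `K = {x̄ ∈ B^r : (ȳ, x̄) ∈ R}` for some `(s-1)`-tuple `ȳ`. -/
theorem stmt_6 {α : Type*} [DecidableEq α] (n r s : ℕ)
    (hn : 2 ≤ n) (hr : 0 < r) (hrn : r < n) (hs : s = n - r + 1)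
    (R : Finset ((Fin (s - 1) → α) × (Fin r → α)))
    (A : Finset α)
    (hRA : ∀ p ∈ R, (∀ i, p.1 i ∈ A) ∧ (∀ i, p.2 i ∈ A))
    (hδ : ∀ B ⊆ A, 0 ≤ (B.card : ℤ) -
      ((R.filter fun p => (∀ i, p.1 i ∈ B) ∧ (∀ i, p.2 i ∈ B)).card : ℤ))
    (cliquePred : Finset α → Finset (Fin r → α) → Prop)
    (hcp : ∀ (B : Finset α) (K : Finset (Fin r → α)),
      cliquePred B K ↔ s ≤ K.card ∧ ∃ y : Fin (s - 1) → α,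
        K = (Fintype.piFinset fun _ : Fin r => B).filter fun x => (y, x) ∈ R)
    (maxcl : Finset α → Finset (Finset (Fin r → α)))
    (hmax : ∀ (B : Finset α) (K : Finset (Fin r → α)),
      K ∈ maxcl B ↔ cliquePred B K ∧ ∀ K', cliquePred B K' → K ⊆ K' → K' = K) :
    ∀ B ⊆ A, 0 ≤ (B.card : ℤ) -
      ∑ K ∈ maxcl B, max 0 ((K.card : ℤ) - ((s : ℤ) - 1)) := by
  intro B hB
  classical
  have hs1 : 1 ≤ s := by omega
  rcases Finset.eq_empty_or_nonempty (maxcl B) with hemp | ⟨K0, hK0⟩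
  · rw [hemp]
    simp
  have hne : Nonempty α := by
    have hc := ((hcp B K0).mp ((hmax B K0).mp hK0).1).1
    obtain ⟨x, hx⟩ := Finset.card_pos.mp (lt_of_lt_of_le (by omega) hc)
    exact ⟨x ⟨0, hr⟩⟩
  have hy : ∀ K ∈ maxcl B, ∃ y : Fin (s-1) → α,
      K = (Fintype.piFinset fun _ : Fin r => B).filter fun x => (y, x) ∈ R := by
    intro K hK
    exact ((hcp B K).mp ((hmax B K).mp hK).1).2
  choose! y hyK using hy
  have hcard : ∀ K ∈ maxcl B, s ≤ K.card := fun K hK =>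
    ((hcp B K).mp ((hmax B K).mp hK).1).1
  set Bb := B ∪ (maxcl B).biUnion (fun K => Finset.image (y K) Finset.univ) with hBb
  have hBbA : Bb ⊆ A := by
    intro a ha
    rcases Finset.mem_union.mp ha with h | h
    · exact hB h
    · rcases Finset.mem_biUnion.mp h with ⟨K, hK, haK⟩
      rcases Finset.mem_image.mp haK with ⟨i, _, rfl⟩
      obtain ⟨x, hx⟩ := Finset.card_pos.mp (lt_of_lt_of_le hs1 (hcard K hK))
      have hxR : (y K, x) ∈ R := by
        rw [hyK K hK] at hx
        exact (Finset.mem_filter.mp hx).2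
      exact (hRA _ hxR).1 i
  have hδBb := hδ Bb hBbA
  set T := (maxcl B).biUnion
      (fun K => K.image (fun x => ((y K, x) : (Fin (s-1) → α) × (Fin r → α)))) with hT
  have hTsub : T ⊆ R.filter fun p => (∀ i, p.1 i ∈ Bb) ∧ (∀ i, p.2 i ∈ Bb) := by
    intro p hp
    rcases Finset.mem_biUnion.mp hp with ⟨K, hK, hpK⟩
    rcases Finset.mem_image.mp hpK with ⟨x, hxK, rfl⟩
    have hxK' := hxK
    rw [hyK K hK] at hxK'
    refine Finset.mem_filter.mpr ⟨(Finset.mem_filter.mp hxK').2, ?_, ?_⟩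
    · intro i
      exact Finset.mem_union_right _ (Finset.mem_biUnion.mpr
        ⟨K, hK, Finset.mem_image_of_mem _ (Finset.mem_univ i)⟩)
    · intro i
      exact Finset.mem_union_left _
        (Fintype.mem_piFinset.mp (Finset.mem_filter.mp hxK').1 i)
  have hTcard : T.card = ∑ K ∈ maxcl B, K.card := by
    rw [hT, Finset.card_biUnion]
    · refine Finset.sum_congr rfl fun K hK => ?_
      apply Finset.card_image_of_injective
      intro a b hab
      exact congrArg Prod.snd hab
    · intro K hK K' hK' hne
      simp only [Function.onFun]
      rw [Finset.disjoint_left]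
      intro p hp hp'
      rcases Finset.mem_image.mp hp with ⟨x, hx, rfl⟩
      rcases Finset.mem_image.mp hp' with ⟨x', hx', heq⟩
      have hyeq : y K' = y K := congrArg Prod.fst heq
      exact hne (by rw [hyK K hK, hyK K' hK', hyeq])
  have hBbcard : Bb.card ≤ B.card + (maxcl B).card * (s - 1) := by
    calc Bb.card ≤ B.card + ((maxcl B).biUnion
          (fun K => Finset.image (y K) Finset.univ)).card := Finset.card_union_le _ _
    _ ≤ B.card + ∑ K ∈ maxcl B, (Finset.image (y K) Finset.univ).card := by
        exact Nat.add_le_add_left (Finset.card_biUnion_le) _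
    _ ≤ B.card + (maxcl B).card * (s - 1) := by
        refine Nat.add_le_add_left ?_ _
        calc ∑ K ∈ maxcl B, (Finset.image (y K) Finset.univ).card
            ≤ ∑ K ∈ maxcl B, (s - 1) := by
              refine Finset.sum_le_sum fun K _ => ?_
              calc (Finset.image (y K) Finset.univ).card
                  ≤ (Finset.univ : Finset (Fin (s-1))).card := Finset.card_image_le
                _ = s - 1 := by simp
          _ = (maxcl B).card * (s - 1) := by rw [Finset.sum_const, smul_eq_mul]
  have hRcard : ∑ K ∈ maxcl B, K.card ≤
      (R.filter fun p => (∀ i, p.1 i ∈ Bb) ∧ (∀ i, p.2 i ∈ Bb)).card := by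
    rw [← hTcard]
    exact Finset.card_le_card hTsub
  have hmaxeq : ∑ K ∈ maxcl B, max 0 ((K.card : ℤ) - ((s : ℤ) - 1)) =
      ∑ K ∈ maxcl B, ((K.card : ℤ) - ((s : ℤ) - 1)) := by
    refine Finset.sum_congr rfl fun K hK => ?_
    have := hcard K hK
    have : ((s : ℤ) - 1) ≤ (K.card : ℤ) - 0 := by
      have : (s : ℤ) ≤ (K.card : ℤ) := by exact_mod_cast this
      omega
    omega
  rw [hmaxeq, Finset.sum_sub_distrib, Finset.sum_const, nsmul_eq_mul]
  have h1 : (Bb.card : ℤ) ≤ (B.card : ℤ) + (maxcl B).card * ((s : ℤ) - 1) := by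
    have : ((s : ℤ) - 1) = ((s - 1 : ℕ) : ℤ) := by omega
    rw [this]
    exact_mod_cast hBbcard
  have h2 : (∑ K ∈ maxcl B, (K.card : ℤ)) ≤
      ((R.filter fun p => (∀ i, p.1 i ∈ Bb) ∧ (∀ i, p.2 i ∈ Bb)).card : ℤ) := by
    have : ((∑ K ∈ maxcl B, K.card : ℕ) : ℤ) = ∑ K ∈ maxcl B, (K.card : ℤ) := by
      push_cast; ring
    rw [← this]
    exact_mod_cast hRcard
  omega
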